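/- Let n ≥ 2 and let a_1,…,a_n be integers with a_i ≥ 2 for all i. Set x = [−a_1,…,−a_n], y = [−a_1,…,−a_{n−1},−a_n+1], and z = [−a_1,…,−a_{n−1}] (values of Hirzebruch–Jung continued fractions). Then z < x < y, and each of the three pairs (x,y), (x,z), (y,z) is joined by an edge in the Farey graph, i.e. writing each number in lowest terms as a fraction with positive denominator, for each pair a/b, c/d one has |ad − bc| = 1. -/

import Mathlib

/-- Hirzebruch–Jung continued fraction `[x₁,…,x_r] = x₁ − 1/(x₂ − 1/(⋯ − 1/x_r))`. -/
def hjCF : List ℤ → ℚ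
  | [] => 0
  | a :: l => (a : ℚ) - 1 / hjCF l

/-- Two rationals are Farey neighbors (joined by an edge in the Farey graph) if,
writing them in lowest terms `a/b` and `c/d` with positive denominators,
`|a*d − b*c| = 1`. -/
def FareyNeighbor (x y : ℚ) : Prop :=
  (x.num * (y.den : ℤ) - y.num * (x.den : ℤ)).natAbs = 1

lemma farey_of (p q p' q' : ℤ) (hq : 0 < q) (hq' : 0 < q')
    (h : (p * q' - p' * q).natAbs = 1) :
    FareyNeighbor ((p : ℚ) / q) ((p' : ℚ) / q') := by
  have cop : Nat.Coprime p.natAbs q.natAbs := by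
    have hd : (Int.gcd p q : ℤ) ∣ p * q' - p' * q :=
      dvd_sub ((Int.gcd_dvd_left _ _).mul_right _) ((Int.gcd_dvd_right _ _).mul_left _)
    have : Int.gcd p q ∣ (p * q' - p' * q).natAbs := Int.natAbs_dvd_natAbs.mpr hd
    rw [h] at this
    exact Nat.eq_one_of_dvd_one this
  have cop' : Nat.Coprime p'.natAbs q'.natAbs := by
    have hd : (Int.gcd p' q' : ℤ) ∣ p * q' - p' * q :=
      dvd_sub ((Int.gcd_dvd_right _ _).mul_left _) ((Int.gcd_dvd_left _ _).mul_right _)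
    have : Int.gcd p' q' ∣ (p * q' - p' * q).natAbs := Int.natAbs_dvd_natAbs.mpr hd
    rw [h] at this
    exact Nat.eq_one_of_dvd_one this
  unfold FareyNeighbor
  rw [Rat.num_div_eq_of_coprime hq cop, Rat.num_div_eq_of_coprime hq' cop',
    Rat.den_div_eq_of_coprime hq cop, Rat.den_div_eq_of_coprime hq' cop', h]

lemma rat_repr (c : ℤ) (u : ℚ) (hu : u < 0) :
    (c : ℚ) - 1 / u = (((u.den : ℤ) - c * u.num : ℤ) : ℚ) / (((-u.num : ℤ)) : ℚ) := by
  have hnum : u.num < 0 := Rat.num_neg.mpr hu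
  have hne : u ≠ 0 := hu.ne
  have hnq : (((-u.num : ℤ)) : ℚ) ≠ 0 := by
    exact_mod_cast (by omega : (-u.num : ℤ) ≠ 0)
  have key : u * (u.den : ℚ) = (u.num : ℚ) := Rat.mul_den_eq_num u
  have h4 : (1 / u) * (u.num : ℚ) = (u.den : ℚ) := by
    rw [← key, one_div, inv_mul_cancel_left₀ hne]
  rw [eq_div_iff hnq]
  push_cast
  linear_combination h4

lemma farey_step (c : ℤ) (u v : ℚ) (hu : u < 0) (hv : v < 0)
    (hf : FareyNeighbor u v) :
    FareyNeighbor ((c : ℚ) - 1 / u) ((c : ℚ) - 1 / v) := by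
  have hnu : u.num < 0 := Rat.num_neg.mpr hu
  have hnv : v.num < 0 := Rat.num_neg.mpr hv
  rw [rat_repr c u hu, rat_repr c v hv]
  apply farey_of _ _ _ _ (by omega) (by omega)
  have e : ((u.den : ℤ) - c * u.num) * (-v.num) - ((v.den : ℤ) - c * v.num) * (-u.num)
      = u.num * (v.den : ℤ) - v.num * (u.den : ℤ) := by ring
  rw [e]
  exact hf

lemma hjCF_cons (c : ℤ) (l : List ℤ) : hjCF (c :: l) = (c : ℚ) - 1 / hjCF l := rfl

lemma neg_one_div_pos {t : ℚ} (ht : t < 0) : 0 < -(1 / t) :=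
  neg_pos.mpr (one_div_neg.mpr ht)

lemma neg_one_div_le_one {t : ℚ} (ht : t ≤ -1) : -(1 / t) ≤ 1 := by
  have h : -(1 / t) = 1 / (-t) := by ring
  rw [h, div_le_one (by linarith)]
  linarith

lemma neg_one_div_lt_one {t : ℚ} (ht : t < -1) : -(1 / t) < 1 := by
  have h : -(1 / t) = 1 / (-t) := by ring
  rw [h, div_lt_one (by linarith)]
  linarith

lemma step_mono {t s : ℚ} (ht : t < 0) (hts : t < s) (hs : s < 0) (c : ℤ) :
    (c : ℚ) - 1 / t < (c : ℚ) - 1 / s := by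
  have hts0 : 0 < t * s := mul_pos_of_neg_of_neg ht hs
  have e : 1 / t - 1 / s = (s - t) / (t * s) := by
    rw [div_sub_div _ _ ht.ne hs.ne]
    ring_nf
  have hpos : 0 < (s - t) / (t * s) := div_pos (by linarith) hts0
  linarith

lemma main_lemma : ∀ (l : List ℤ), l ≠ [] → (∀ c ∈ l, c ≤ -2) → ∀ b : ℤ, b ≤ -2 →
    hjCF l < -1 ∧ hjCF (l ++ [b]) < -1 ∧ hjCF (l ++ [b + 1]) ≤ -1 ∧
    hjCF l < hjCF (l ++ [b]) ∧ hjCF (l ++ [b]) < hjCF (l ++ [b + 1]) ∧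
    FareyNeighbor (hjCF (l ++ [b])) (hjCF (l ++ [b + 1])) ∧
    FareyNeighbor (hjCF (l ++ [b])) (hjCF l) ∧
    FareyNeighbor (hjCF (l ++ [b + 1])) (hjCF l) := by
  intro l
  induction l with
  | nil => intro h; exact absurd rfl h
  | cons c l' ih =>
    intro _ hmem b hb
    have hc : c ≤ -2 := hmem c List.mem_cons_self
    rcases eq_or_ne l' [] with rfl | hne
    · -- base case: l = [c]
      have hz : hjCF [c] = (c : ℚ) := by simp [hjCF]
      have hbq : (b : ℚ) ≤ -2 := by exact_mod_cast hb
      have hb1q : (b : ℚ) + 1 ≤ -1 := by linarith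
      have hxe : hjCF ([c] ++ [b]) = (c : ℚ) - 1 / b := by simp [hjCF]
      have hye : hjCF ([c] ++ [b + 1]) = (c : ℚ) - 1 / ((b : ℚ) + 1) := by
        simp [hjCF]
      have hbneg : (b : ℚ) < 0 := by linarith
      have hb1neg : (b : ℚ) + 1 < 0 := by linarith
      have hbound1 : hjCF ([c] ++ [b]) < -1 := by
        rw [hxe]
        have := neg_one_div_lt_one (t := (b : ℚ)) (by linarith)
        have hcq : (c : ℚ) ≤ -2 := by exact_mod_cast hc
        linarith
      have hbound2 : hjCF ([c] ++ [b + 1]) ≤ -1 := by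
        rw [hye]
        have := neg_one_div_le_one (t := (b : ℚ) + 1) (by linarith)
        have hcq : (c : ℚ) ≤ -2 := by exact_mod_cast hc
        linarith
      have hcq : (c : ℚ) ≤ -2 := by exact_mod_cast hc
      refine ⟨by rw [hz]; linarith, hbound1, hbound2, ?_, ?_, ?_, ?_, ?_⟩
      · rw [hz, hxe]
        have := neg_one_div_pos hbneg
        linarith
      · rw [hxe, hye]
        exact step_mono hbneg (by linarith) hb1neg c
      · -- Farey x y
        rw [hxe, hye]
        have e1 : (c : ℚ) - 1 / b = ((1 - c * b : ℤ) : ℚ) / ((-b : ℤ) : ℚ) := by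
          have hb0 : (b : ℚ) ≠ 0 := hbneg.ne
          push_cast
          field_simp [hb0]
          ring
        have e2 : (c : ℚ) - 1 / ((b : ℚ) + 1) = ((1 - c * (b + 1) : ℤ) : ℚ) / ((-(b + 1) : ℤ) : ℚ) := by
          have hb0 : (b : ℚ) + 1 ≠ 0 := hb1neg.ne
          have hd : ((-(b + 1) : ℤ) : ℚ) ≠ 0 := by push_cast; intro hh; apply hb0; linarith
          have hk : (1 / ((b : ℚ) + 1)) * ((b : ℚ) + 1) = 1 := one_div_mul_cancel hb0
          rw [eq_div_iff hd]
          push_cast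
          linear_combination hk
        rw [e1, e2]
        apply farey_of _ _ _ _ (by omega) (by omega)
        have : (1 - c * b) * (-(b + 1)) - (1 - c * (b + 1)) * (-b) = -1 := by ring
        rw [this]; rfl
      · -- Farey x z
        rw [hxe, hz]
        have e1 : (c : ℚ) - 1 / b = ((1 - c * b : ℤ) : ℚ) / ((-b : ℤ) : ℚ) := by
          have hb0 : (b : ℚ) ≠ 0 := hbneg.ne
          push_cast
          field_simp [hb0]
          ring
        have e2 : (c : ℚ) = ((c : ℤ) : ℚ) / ((1 : ℤ) : ℚ) := by norm_num
        rw [e1, e2]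
        apply farey_of _ _ _ _ (by omega) (by omega)
        have : (1 - c * b) * 1 - c * (-b) = 1 := by ring
        rw [this]; rfl
      · -- Farey y z
        rw [hye, hz]
        have e1 : (c : ℚ) - 1 / ((b : ℚ) + 1) = ((1 - c * (b + 1) : ℤ) : ℚ) / ((-(b + 1) : ℤ) : ℚ) := by
          have hb0 : (b : ℚ) + 1 ≠ 0 := hb1neg.ne
          have hd : ((-(b + 1) : ℤ) : ℚ) ≠ 0 := by push_cast; intro hh; apply hb0; linarith
          have hk : (1 / ((b : ℚ) + 1)) * ((b : ℚ) + 1) = 1 := one_div_mul_cancel hb0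
          rw [eq_div_iff hd]
          push_cast
          linear_combination hk
        have e2 : (c : ℚ) = ((c : ℤ) : ℚ) / ((1 : ℤ) : ℚ) := by norm_num
        rw [e1, e2]
        apply farey_of _ _ _ _ (by omega) (by omega)
        have : (1 - c * (b + 1)) * 1 - c * (-(b + 1)) = 1 := by ring
        rw [this]; rfl
    · -- inductive step
      have hmem' : ∀ d ∈ l', d ≤ -2 := fun d hd => hmem d (List.mem_cons_of_mem c hd)
      obtain ⟨ihz, ihx, ihy, ihzx, ihxy, ihfxy, ihfxz, ihfyz⟩ := ih hne hmem' b hb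
      have hcq : (c : ℚ) ≤ -2 := by exact_mod_cast hc
      have hzneg : hjCF l' < 0 := by linarith
      have hxneg : hjCF (l' ++ [b]) < 0 := by linarith
      have hyneg : hjCF (l' ++ [b + 1]) < 0 := by linarith
      have eZ : hjCF (c :: l') = (c : ℚ) - 1 / hjCF l' := rfl
      have eX : hjCF ((c :: l') ++ [b]) = (c : ℚ) - 1 / hjCF (l' ++ [b]) := rfl
      have eY : hjCF ((c :: l') ++ [b + 1]) = (c : ℚ) - 1 / hjCF (l' ++ [b + 1]) := rfl
      refine ⟨?_, ?_, ?_, ?_, ?_, ?_, ?_, ?_⟩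
      · rw [eZ]; have := neg_one_div_lt_one ihz; linarith
      · rw [eX]; have := neg_one_div_lt_one ihx; linarith
      · rw [eY]; have := neg_one_div_le_one ihy; linarith
      · rw [eZ, eX]; exact step_mono hzneg ihzx hxneg c
      · rw [eX, eY]; exact step_mono hxneg ihxy hyneg c
      · rw [eX, eY]; exact farey_step c _ _ hxneg hyneg ihfxy
      · rw [eX, eZ]; exact farey_step c _ _ hxneg hzneg ihfxz
      · rw [eY, eZ]; exact farey_step c _ _ hyneg hzneg ihfyz

theorem stmt0 (n : ℕ) (hn : 2 ≤ n) (a : ℕ → ℤ) (ha : ∀ i < n, 2 ≤ a i)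
    (x y z : ℚ)
    (hx : x = hjCF ((List.range n).map fun i => -a i))
    (hy : y = hjCF ((List.range (n - 1)).map (fun i => -a i) ++ [-a (n - 1) + 1]))
    (hz : z = hjCF ((List.range (n - 1)).map fun i => -a i)) :
    z < x ∧ x < y ∧ FareyNeighbor x y ∧ FareyNeighbor x z ∧ FareyNeighbor y z := by
  set l : List ℤ := (List.range (n - 1)).map fun i => -a i with hl
  have hne : l ≠ [] := by
    simp [hl, List.map_eq_nil_iff, List.range_eq_nil]
    omega
  have hmem : ∀ c ∈ l, c ≤ -2 := by
    intro c hcl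
    rw [hl, List.mem_map] at hcl
    obtain ⟨i, hi, rfl⟩ := hcl
    rw [List.mem_range] at hi
    have := ha i (by omega)
    omega
  have hb : -a (n - 1) ≤ -2 := by
    have := ha (n - 1) (by omega)
    omega
  have hxl : x = hjCF (l ++ [-a (n - 1)]) := by
    rw [hx, hl]
    congr 1
    have : n = (n - 1) + 1 := by omega
    rw [this, List.range_succ, List.map_append]
    simp
  have hyl : y = hjCF (l ++ [-a (n - 1) + 1]) := hy
  obtain ⟨_, _, _, h1, h2, h3, h4, h5⟩ := main_lemma l hne hmem (-a (n - 1)) hb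
  rw [hxl, hyl, hz]
  exact ⟨h1, h2, h3, h4, h5⟩
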